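/- Suppose t is a positive integer, p ∈ (0,1), and q(0), q(1), ..., q(i) are reals each in (0, p]. Define s(0) ≥ q(0)·(n−1) and s(j) ≥ q(j)·(s(j−1) − 1) for 1 ≤ j ≤ i, where n is a positive real. Then s(i) ≥ n·∏_{j=0}^{i} q(j) − p/(1−p). -/

import Mathlib

theorem stmt_17 (i : ℕ) (p : ℝ) (hp0 : 0 < p) (hp1 : p < 1)
    (q : ℕ → ℝ) (hq : ∀ j ≤ i, 0 < q j ∧ q j ≤ p)
    (n : ℝ) (hn : 0 < n) (s : ℕ → ℝ)
    (hs0 : s 0 ≥ q 0 * (n - 1))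
    (hsj : ∀ j : ℕ, 1 ≤ j → j ≤ i → s j ≥ q j * (s (j - 1) - 1)) :
    s i ≥ n * (∏ j ∈ Finset.range (i + 1), q j) - p / (1 - p) := by
  induction i with
  | zero =>
    rw [show (0:ℕ)+1 = 1 from rfl, Finset.prod_range_one]
    have hq0 := hq 0 (le_refl 0)
    have h1 : p ≤ p / (1 - p) := by
      rw [le_div_iff₀ (by linarith)]; nlinarith
    nlinarith [hq0.1, hq0.2]
  | succ i ih =>
    have hqi : ∀ j ≤ i, 0 < q j ∧ q j ≤ p := fun j hj => hq j (by omega)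
    have hih := ih hqi (fun j h1 h2 => hsj j h1 (by omega))
    have hstep := hsj (i + 1) (by omega) le_rfl
    simp only [Nat.add_sub_cancel] at hstep
    rw [Finset.prod_range_succ]
    have hqs := hq (i + 1) le_rfl
    have hQ : 0 < ∏ j ∈ Finset.range (i + 1), q j :=
      Finset.prod_pos fun j hj => (hqi j (Finset.mem_range_succ_iff.mp hj)).1
    have hkey : q (i + 1) * (p / (1 - p) + 1) ≤ p / (1 - p) := by
      have h0 : (1:ℝ) - p ≠ 0 := by linarith
      have h1 : p / (1 - p) + 1 = 1 / (1 - p) := by field_simp; ring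
      rw [h1]
      have h2 : (0:ℝ) < 1 / (1 - p) := one_div_pos.mpr (by linarith)
      calc q (i + 1) * (1 / (1 - p)) ≤ p * (1 / (1 - p)) :=
            mul_le_mul_of_nonneg_right hqs.2 h2.le
        _ = p / (1 - p) := by ring
    have hmul : q (i + 1) * (n * (∏ j ∈ Finset.range (i + 1), q j) - p / (1 - p) - 1)
        ≤ q (i + 1) * (s i - 1) :=
      mul_le_mul_of_nonneg_left (by linarith) hqs.1.le
    nlinarith [hstep, hmul, hkey]
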